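/- Let α, β > 0, μ ≥ 0 with α − β(μ+1) < −1, and γ, δ ∈ ℝ, and set ŝ := −2(α+1)/β + 2(μ+1) > 0. For every complex s with 0 < Re(s) < ŝ, the Mellin transform of S_{α,β,γ,δ,μ} satisfies ∫_0^∞ S_{α,β,γ,δ,μ}(r)·r^{s−1} dr = D(s)·Γ(μ+1−s/2)·Γ(s/2) / (2·Γ(μ+1)), where D(s) := Σ_{n=2}^∞ (log n)^{δs/2 + γ − δ(μ+1)} · n^{βs/2 + α − β(μ+1)} (the series defining D(s) converging absolutely for Re(s) < ŝ). -/

import Mathlib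

open Filter Complex MeasureTheory

section AuxLemmas
open Set

lemma aux_cpow_pos {x : ℝ} (hx : 0 < x) (w : ℂ) :
    ((x : ℂ)) ^ w = Complex.exp ((Real.log x : ℂ) * w) := by
  rw [Complex.cpow_def_of_ne_zero (by exact_mod_cast hx.ne'), Complex.ofReal_log hx.le]

lemma aux_summable {b : ℝ} (d : ℝ) (hb : b < -1) :
    Summable (fun n : ℕ => ((n : ℝ) + 2) ^ b * Real.log ((n : ℝ) + 2) ^ d) := by
  set b' := (b + -1) / 2 with hb'def
  have hbb' : b < b' := by rw [hb'def]; linarith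
  have hb'1 : b' < -1 := by rw [hb'def]; linarith
  have hsum : Summable (fun n : ℕ => ((n : ℝ) + 2) ^ b') := by
    have := (summable_nat_add_iff (f := fun n : ℕ => (n : ℝ) ^ b') 2).mpr
      (Real.summable_nat_rpow.mpr hb'1)
    refine this.congr fun n => ?_
    push_cast; ring_nf
  refine summable_of_isBigO_nat hsum ?_
  have h1 : (fun x : ℝ => Real.log x ^ d) =o[atTop] fun x : ℝ => x ^ (b' - b) :=
    isLittleO_log_rpow_rpow_atTop d (by linarith)
  have h2 : Tendsto (fun n : ℕ => (n : ℝ) + 2) atTop atTop :=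
    tendsto_atTop_add_const_right _ _ tendsto_natCast_atTop_atTop
  have h3 : (fun n : ℕ => Real.log ((n : ℝ) + 2) ^ d) =o[atTop]
      fun n : ℕ => ((n : ℝ) + 2) ^ (b' - b) := h1.comp_tendsto h2
  have h4 := h3.isBigO.mul (Asymptotics.isBigO_refl (fun n : ℕ => ((n : ℝ) + 2) ^ b) atTop)
  refine (h4.congr ?_ ?_)
  · intro n; ring
  · intro n
    rw [← Real.rpow_add (by positivity)]
    ring_nf

lemma aux_key {c : ℝ} (hc : 0 < c) {μ : ℝ} (hμ : 0 ≤ μ) {s : ℂ}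
    (h0 : 0 < s.re) (h2 : s.re < 2 * (μ + 1)) :
    IntegrableOn (fun r : ℝ => ((((c + r ^ 2) ^ (μ + 1) : ℝ)) : ℂ)⁻¹ * (r : ℂ) ^ (s - 1))
      (Ioi 0) ∧
    ∫ r in Ioi (0:ℝ), ((((c + r ^ 2) ^ (μ + 1) : ℝ)) : ℂ)⁻¹ * (r : ℂ) ^ (s - 1)
      = (c : ℂ) ^ (s / 2 - ((μ : ℂ) + 1)) *
        (Complex.Gamma ((μ : ℂ) + 1 - s / 2) * Complex.Gamma (s / 2)
          / (2 * Complex.Gamma ((μ : ℂ) + 1))) := by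
  have hq : ∀ r : ℝ, 0 < c + r ^ 2 := fun r => by positivity
  set f : ℝ → ℝ := fun r => r ^ 2 / (c + r ^ 2) with hf
  set f' : ℝ → ℝ := fun r => 2 * c * r / (c + r ^ 2) ^ 2 with hf'
  set g : ℝ → ℂ := fun t => (t : ℂ) ^ (s / 2 - 1) * ((1 - t : ℝ) : ℂ) ^ ((μ : ℂ) + 1 - s / 2 - 1)
    with hg
  -- derivative
  have hderiv : ∀ x ∈ Ioi (0:ℝ), HasDerivWithinAt f (f' x) (Ioi 0) x := by
    intro x _
    have h1 : HasDerivAt (fun r : ℝ => r ^ 2) (2 * x) x := by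
      simpa using hasDerivAt_pow 2 x
    have h2 : HasDerivAt (fun r : ℝ => c + r ^ 2) (2 * x) x := by
      have h := (hasDerivAt_const x c).add h1; rw [zero_add] at h; exact h
    have h3 := h1.div h2 (hq x).ne'
    have hEq : (2 * x * (c + x ^ 2) - x ^ 2 * (2 * x)) / (c + x ^ 2) ^ 2 = f' x := by
      rw [hf']; congr 1; ring
    exact (hEq ▸ h3).hasDerivWithinAt
  -- injectivity
  have hmono : StrictMonoOn f (Ioi 0) := by
    intro x hx y hy hxy
    simp only [hf]
    rw [div_lt_div_iff₀ (hq x) (hq y)]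
    have hx0 : 0 < x := hx
    have hxy2 : x ^ 2 < y ^ 2 := by nlinarith
    nlinarith [mul_pos hc (sub_pos.mpr hxy2)]
  have hinj : InjOn f (Ioi 0) := hmono.injOn
  -- image
  have himg : f '' Ioi 0 = Ioo 0 1 := by
    ext t
    constructor
    · rintro ⟨r, hr, rfl⟩
      have hr0 : (0:ℝ) < r := hr
      constructor
      · exact div_pos (by positivity) (hq r)
      · rw [div_lt_one (hq r)]; linarith
    · rintro ⟨ht0, ht1⟩
      have h1t : 0 < 1 - t := by linarith
      have harg : 0 < c * t / (1 - t) := by positivity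
      refine ⟨Real.sqrt (c * t / (1 - t)), Real.sqrt_pos.mpr harg, ?_⟩
      have hsq : Real.sqrt (c * t / (1 - t)) ^ 2 = c * t / (1 - t) :=
        Real.sq_sqrt harg.le
      simp only [hf, hsq]
      rw [div_eq_iff (by positivity)]
      field_simp
      ring
  -- Jacobian change of variables
  have hjac := integral_image_eq_integral_abs_deriv_smul measurableSet_Ioi hderiv hinj g
  rw [himg] at hjac
  -- pointwise identification of the transformed integrand
  have hpt : ∀ r ∈ Ioi (0:ℝ), |f' r| • g (f r)
      = (2 * (c : ℂ) ^ ((μ : ℂ) + 1 - s / 2)) *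
        (((((c + r ^ 2) ^ (μ + 1) : ℝ)) : ℂ)⁻¹ * (r : ℂ) ^ (s - 1)) := by
    intro r hr
    have hr0 : (0:ℝ) < r := hr
    have hfr : f r = r ^ 2 / (c + r ^ 2) := rfl
    have h1fr : (1 : ℝ) - f r = c / (c + r ^ 2) := by
      rw [hfr]; field_simp; ring
    have hfr' : |f' r| = 2 * c * r / (c + r ^ 2) ^ 2 := by
      rw [abs_of_pos]; positivity
    rw [hg]
    simp only [h1fr]; simp only [hfr, hfr']
    -- convert everything to exponentials
    have e1 : ((r ^ 2 / (c + r ^ 2) : ℝ) : ℂ) ^ (s / 2 - 1)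
        = Complex.exp ((Real.log (r ^ 2 / (c + r ^ 2)) : ℂ) * (s / 2 - 1)) :=
      aux_cpow_pos (by positivity) _
    have e2 : ((c / (c + r ^ 2) : ℝ) : ℂ) ^ ((μ : ℂ) + 1 - s / 2 - 1)
        = Complex.exp ((Real.log (c / (c + r ^ 2)) : ℂ) * ((μ : ℂ) + 1 - s / 2 - 1)) :=
      aux_cpow_pos (by positivity) _
    have e3 : (((c + r ^ 2) ^ (μ + 1) : ℝ) : ℂ)⁻¹
        = Complex.exp (-((Real.log (c + r ^ 2) : ℂ) * ((μ : ℂ) + 1))) := by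
      rw [Complex.exp_neg, ← aux_cpow_pos (hq r),
        show ((μ : ℂ) + 1) = ((μ + 1 : ℝ) : ℂ) by push_cast; ring,
        ← Complex.ofReal_cpow (hq r).le]
    have e4 : ((r : ℝ) : ℂ) ^ (s - 1) = Complex.exp ((Real.log r : ℂ) * (s - 1)) :=
      aux_cpow_pos hr0 _
    have e5 : (c : ℂ) ^ ((μ : ℂ) + 1 - s / 2)
        = Complex.exp ((Real.log c : ℂ) * ((μ : ℂ) + 1 - s / 2)) := aux_cpow_pos hc _
    have e6 : ((2 * c * r / (c + r ^ 2) ^ 2 : ℝ) : ℂ)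
        = 2 * Complex.exp ((Real.log c : ℂ))
            * Complex.exp ((Real.log r : ℂ)) * Complex.exp (-(2 * (Real.log (c + r ^ 2) : ℂ))) := by
      rw [← Complex.ofReal_exp, ← Complex.ofReal_exp, Real.exp_log hc, Real.exp_log hr0]
      have : Complex.exp (-(2 * (Real.log (c + r ^ 2) : ℂ)))
          = ((((c + r ^ 2) ^ 2)⁻¹ : ℝ) : ℂ) := by
        rw [Complex.exp_neg, mul_comm (2 : ℂ), ← aux_cpow_pos (hq r),
          show ((2:ℂ)) = ((2:ℕ):ℂ) by norm_num, Complex.cpow_natCast]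
        push_cast
        norm_num
      rw [this]
      push_cast
      field_simp
    have elog1 : Real.log (r ^ 2 / (c + r ^ 2)) = 2 * Real.log r - Real.log (c + r ^ 2) := by
      rw [Real.log_div (by positivity) (hq r).ne', Real.log_pow]
      push_cast; ring
    have elog2 : Real.log (c / (c + r ^ 2)) = Real.log c - Real.log (c + r ^ 2) := by
      rw [Real.log_div hc.ne' (hq r).ne']
    rw [Complex.real_smul, e1, e2, e3, e4, e5, e6, elog1, elog2]
    simp only [mul_assoc, ← Complex.exp_add]
    congr 1
    push_cast
    ring
  -- Beta-function side
  have h2re : (s / 2).re = s.re / 2 := by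
    rw [show (2 : ℂ) = ((2 : ℝ) : ℂ) by norm_num, Complex.div_ofReal_re]
  have hu : 0 < (s / 2).re := by rw [h2re]; linarith
  have hv : 0 < ((μ : ℂ) + 1 - s / 2).re := by
    simp only [Complex.sub_re, Complex.add_re, Complex.ofReal_re, Complex.one_re, h2re]
    linarith
  have hgval : ∫ x in Ioo (0:ℝ) 1, g x
      = Complex.betaIntegral (s / 2) ((μ : ℂ) + 1 - s / 2) := by
    rw [Complex.betaIntegral, intervalIntegral.integral_of_le zero_le_one,
      integral_Ioc_eq_integral_Ioo]
    refine (setIntegral_congr_fun measurableSet_Ioo fun x hx => ?_).symm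
    simp only [hg, Complex.ofReal_sub, Complex.ofReal_one]
  have hIntBeta : IntegrableOn g (Ioo 0 1) := by
    have hb := Complex.betaIntegral_convergent hu hv
    rw [intervalIntegrable_iff_integrableOn_Ioo_of_le zero_le_one] at hb
    exact hb.congr_fun
      (fun x hx => by simp only [hg, Complex.ofReal_sub, Complex.ofReal_one]) measurableSet_Ioo
  have hIntJ : IntegrableOn (fun x => |f' x| • g (f x)) (Ioi 0) := by
    have := (integrableOn_image_iff_integrableOn_abs_deriv_smul measurableSet_Ioi hderiv hinj g)
    rw [himg] at this
    exact this.mp hIntBeta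
  set C : ℂ := 2 * (c : ℂ) ^ ((μ : ℂ) + 1 - s / 2) with hC
  have hCne : C ≠ 0 := by
    rw [hC, aux_cpow_pos hc]
    exact mul_ne_zero two_ne_zero (Complex.exp_ne_zero _)
  have hInt2 : IntegrableOn
      (fun r : ℝ => C * (((((c + r ^ 2) ^ (μ + 1) : ℝ)) : ℂ)⁻¹ * (r : ℂ) ^ (s - 1)))
      (Ioi 0) :=
    hIntJ.congr_fun (fun r hr => hpt r hr) measurableSet_Ioi
  have hIntF : IntegrableOn
      (fun r : ℝ => ((((c + r ^ 2) ^ (μ + 1) : ℝ)) : ℂ)⁻¹ * (r : ℂ) ^ (s - 1)) (Ioi 0) := by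
    refine (hInt2.const_mul C⁻¹).congr (Filter.Eventually.of_forall fun r => ?_)
    simp only [← mul_assoc, inv_mul_cancel₀ hCne, one_mul]
  refine ⟨hIntF, ?_⟩
  have hval : Complex.betaIntegral (s / 2) ((μ : ℂ) + 1 - s / 2)
      = C * ∫ r in Ioi (0:ℝ), ((((c + r ^ 2) ^ (μ + 1) : ℝ)) : ℂ)⁻¹ * (r : ℂ) ^ (s - 1) := by
    rw [← hgval, hjac, setIntegral_congr_fun measurableSet_Ioi hpt, integral_const_mul]
  have hgam := Complex.Gamma_mul_Gamma_eq_betaIntegral hu hv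
  rw [show s / 2 + ((μ : ℂ) + 1 - s / 2) = (μ : ℂ) + 1 by ring] at hgam
  have hgamne : Complex.Gamma ((μ : ℂ) + 1) ≠ 0 := by
    apply Complex.Gamma_ne_zero_of_re_pos
    simp only [Complex.add_re, Complex.ofReal_re, Complex.one_re]
    linarith
  have hcpow : (c : ℂ) ^ (s / 2 - ((μ : ℂ) + 1)) = ((c : ℂ) ^ ((μ : ℂ) + 1 - s / 2))⁻¹ := by
    rw [show s / 2 - ((μ : ℂ) + 1) = -((μ : ℂ) + 1 - s / 2) by ring, Complex.cpow_neg]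
  have hcpne : (c : ℂ) ^ ((μ : ℂ) + 1 - s / 2) ≠ 0 := by
    rw [aux_cpow_pos hc]; exact Complex.exp_ne_zero _
  have hbe : Complex.betaIntegral (s / 2) ((μ : ℂ) + 1 - s / 2)
      = Complex.Gamma (s / 2) * Complex.Gamma ((μ : ℂ) + 1 - s / 2)
        / Complex.Gamma ((μ : ℂ) + 1) := by
    rw [eq_div_iff hgamne]; linear_combination -hgam
  have hI : (∫ r in Ioi (0:ℝ), ((((c + r ^ 2) ^ (μ + 1) : ℝ)) : ℂ)⁻¹ * (r : ℂ) ^ (s - 1))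
      = C⁻¹ * (Complex.Gamma (s / 2) * Complex.Gamma ((μ : ℂ) + 1 - s / 2)
          / Complex.Gamma ((μ : ℂ) + 1)) := by
    rw [← hbe, hval, ← mul_assoc, inv_mul_cancel₀ hCne, one_mul]
  rw [hI, hC, hcpow, mul_inv]
  ring

lemma aux_keyR {c : ℝ} (hc : 0 < c) {μ : ℝ} (hμ : 0 ≤ μ) {σ : ℝ}
    (h0 : 0 < σ) (h2 : σ < 2 * (μ + 1)) :
    ∫ r in Ioi (0:ℝ), ((c + r ^ 2) ^ (μ + 1))⁻¹ * r ^ (σ - 1)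
      = c ^ (σ / 2 - (μ + 1)) *
        (Real.Gamma (μ + 1 - σ / 2) * Real.Gamma (σ / 2) / (2 * Real.Gamma (μ + 1))) := by
  have h0' : 0 < ((σ : ℂ)).re := by simpa
  have h2' : ((σ : ℂ)).re < 2 * (μ + 1) := by simpa
  have hk := (aux_key hc hμ h0' h2').2
  have hcong : (∫ r in Ioi (0:ℝ), ((((c + r ^ 2) ^ (μ + 1) : ℝ)) : ℂ)⁻¹ * (r : ℂ) ^ ((σ : ℂ) - 1))
      = ∫ r in Ioi (0:ℝ), (((((c + r ^ 2) ^ (μ + 1))⁻¹ * r ^ (σ - 1) : ℝ)) : ℂ) := by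
    refine setIntegral_congr_fun measurableSet_Ioi fun r hr => ?_
    rw [show ((σ : ℂ) - 1) = ((σ - 1 : ℝ) : ℂ) by push_cast; ring,
      ← Complex.ofReal_cpow (le_of_lt hr), Complex.ofReal_mul, Complex.ofReal_inv]
  have h3 : ((∫ r in Ioi (0:ℝ), ((c + r ^ 2) ^ (μ + 1))⁻¹ * r ^ (σ - 1) : ℝ) : ℂ)
      = ∫ r in Ioi (0:ℝ), (((((c + r ^ 2) ^ (μ + 1))⁻¹ * r ^ (σ - 1) : ℝ)) : ℂ) :=
    (integral_ofReal (𝕜 := ℂ)).symm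
  rw [hcong, ← h3] at hk
  rw [show (σ : ℂ) / 2 - ((μ : ℂ) + 1) = ((σ / 2 - (μ + 1) : ℝ) : ℂ) by push_cast; ring,
    ← Complex.ofReal_cpow hc.le,
    show ((μ : ℂ) + 1 - (σ : ℂ) / 2) = ((μ + 1 - σ / 2 : ℝ) : ℂ) by push_cast; ring,
    show ((σ : ℂ) / 2) = ((σ / 2 : ℝ) : ℂ) by push_cast; ring,
    show ((μ : ℂ) + 1) = ((μ + 1 : ℝ) : ℂ) by push_cast; ring,
    Complex.Gamma_ofReal, Complex.Gamma_ofReal, Complex.Gamma_ofReal] at hk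
  exact_mod_cast hk

lemma aux_wre (p q μ : ℝ) (s : ℂ) :
    ((p : ℂ) * s / 2 + (q : ℂ) - (p : ℂ) * ((μ : ℂ) + 1)).re
      = p * s.re / 2 + q - p * (μ + 1) := by
  have h : (p : ℂ) * s / 2 + (q : ℂ) - (p : ℂ) * ((μ : ℂ) + 1)
      = ((p / 2 : ℝ) : ℂ) * s + ((q - p * (μ + 1) : ℝ) : ℂ) := by push_cast; ring
  rw [h]
  simp only [Complex.add_re, Complex.re_ofReal_mul, Complex.ofReal_re]
  ring

end AuxLemmas

/-- Equation (2.8): the Mellin transform of the power-logarithmic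
Mathieu-type series `S_{α,β,γ,δ,μ}` on the strip `0 < Re(s) < ŝ`,
`ŝ = −2(α+1)/β + 2(μ+1)`, equals `D(s) Γ(μ+1−s/2) Γ(s/2) / (2 Γ(μ+1))`, where
`D(s) = ∑_{n=2}^∞ (log n)^{δs/2+γ−δ(μ+1)} n^{βs/2+α−β(μ+1)}` (with
`n^w = exp(w log n)` and `(log n)^w = exp(w log log n)`), the series defining
`D(s)` being absolutely convergent for `Re(s) < ŝ`. -/
theorem mathieu_power_log_mellin_transform
    (α β γ δ μ : ℝ) (hα : 0 < α) (hβ : 0 < β) (hμ : 0 ≤ μ)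
    (hconv : α - β * (μ + 1) < -1)
    (s : ℂ) (hs₀ : 0 < s.re) (hs₁ : s.re < -2 * (α + 1) / β + 2 * (μ + 1)) :
    Summable (fun n : ℕ =>
      ‖Complex.exp (((δ : ℂ) * s / 2 + (γ : ℂ) - (δ : ℂ) * ((μ : ℂ) + 1)) *
          (Real.log (Real.log ((n : ℝ) + 2)) : ℂ)) *
        Complex.exp (((β : ℂ) * s / 2 + (α : ℂ) - (β : ℂ) * ((μ : ℂ) + 1)) *
          (Real.log ((n : ℝ) + 2) : ℂ))‖) ∧
    ∫ r in Set.Ioi (0 : ℝ),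
        ((∑' n : ℕ, ((n : ℝ) + 2) ^ α * (Real.log ((n : ℝ) + 2)) ^ γ /
          (((n : ℝ) + 2) ^ β * (Real.log ((n : ℝ) + 2)) ^ δ + r ^ 2) ^ (μ + 1) : ℝ) : ℂ)
        * (r : ℂ) ^ (s - 1)
      = (∑' n : ℕ,
          Complex.exp (((δ : ℂ) * s / 2 + (γ : ℂ) - (δ : ℂ) * ((μ : ℂ) + 1)) *
            (Real.log (Real.log ((n : ℝ) + 2)) : ℂ)) *
          Complex.exp (((β : ℂ) * s / 2 + (α : ℂ) - (β : ℂ) * ((μ : ℂ) + 1)) *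
            (Real.log ((n : ℝ) + 2) : ℂ)))
        * Complex.Gamma ((μ : ℂ) + 1 - s / 2) * Complex.Gamma (s / 2)
        / (2 * Complex.Gamma ((μ : ℂ) + 1)) := by
  -- basic positivity facts
  have hn2 : ∀ n : ℕ, (0:ℝ) < (n : ℝ) + 2 := fun n => by positivity
  have hL1 : ∀ n : ℕ, 0 < Real.log ((n : ℝ) + 2) := fun n =>
    Real.log_pos (by have := Nat.cast_nonneg (α := ℝ) n; linarith)
  set σ : ℝ := s.re with hσdef
  -- the crucial exponent bound
  have hb : β * σ / 2 + α - β * (μ + 1) < -1 := by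
    have hkey : β * (-2 * (α + 1) / β + 2 * (μ + 1)) = -2 * (α + 1) + 2 * β * (μ + 1) := by
      field_simp
    have h := mul_lt_mul_of_pos_left hs₁ hβ
    rw [hkey] at h
    nlinarith
  have h2σ : σ < 2 * (μ + 1) := by
    have hd : 0 < 2 * (α + 1) / β := by positivity
    have : -2 * (α + 1) / β < 0 := by
      rw [neg_mul, neg_div]; linarith
    linarith
  have h2σ' : s.re < 2 * (μ + 1) := h2σ
  -- abbreviations
  set w₁ : ℂ := (δ : ℂ) * s / 2 + (γ : ℂ) - (δ : ℂ) * ((μ : ℂ) + 1) with hw₁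
  set w₂ : ℂ := (β : ℂ) * s / 2 + (α : ℂ) - (β : ℂ) * ((μ : ℂ) + 1) with hw₂
  set E : ℕ → ℂ := fun n =>
    Complex.exp (w₁ * (Real.log (Real.log ((n : ℝ) + 2)) : ℂ)) *
      Complex.exp (w₂ * (Real.log ((n : ℝ) + 2) : ℂ)) with hE
  have hw₁re : w₁.re = δ * σ / 2 + γ - δ * (μ + 1) := aux_wre δ γ μ s
  have hw₂re : w₂.re = β * σ / 2 + α - β * (μ + 1) := aux_wre β α μ s
  -- norm of E n
  have hEnorm : ∀ n : ℕ, ‖E n‖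
      = ((n : ℝ) + 2) ^ w₂.re * Real.log ((n : ℝ) + 2) ^ w₁.re := by
    intro n
    rw [hE]
    simp only [norm_mul, Complex.norm_exp]
    have r1 : (w₁ * (Real.log (Real.log ((n : ℝ) + 2)) : ℂ)).re
        = w₁.re * Real.log (Real.log ((n : ℝ) + 2)) := by
      simp [Complex.mul_re]
    have r2 : (w₂ * (Real.log ((n : ℝ) + 2) : ℂ)).re
        = w₂.re * Real.log ((n : ℝ) + 2) := by
      simp [Complex.mul_re]
    rw [r1, r2, Real.rpow_def_of_pos (hn2 n), Real.rpow_def_of_pos (hL1 n)]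
    rw [mul_comm (Real.log ((n:ℝ)+2)) w₂.re, mul_comm (Real.log (Real.log ((n:ℝ)+2))) w₁.re]
    ring
  have hsumE : Summable (fun n : ℕ => ‖E n‖) := by
    have hsum0 := aux_summable (b := w₂.re) w₁.re (by rw [hw₂re]; exact hb)
    exact hsum0.congr fun n => (hEnorm n).symm
  refine ⟨hsumE, ?_⟩
  -- part 2
  set a : ℕ → ℝ := fun n => ((n : ℝ) + 2) ^ α * Real.log ((n : ℝ) + 2) ^ γ with ha
  set cc : ℕ → ℝ := fun n => ((n : ℝ) + 2) ^ β * Real.log ((n : ℝ) + 2) ^ δ with hcc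
  have hapos : ∀ n, 0 < a n := fun n => by
    simp only [ha]
    exact mul_pos (Real.rpow_pos_of_pos (hn2 n) _) (Real.rpow_pos_of_pos (hL1 n) _)
  have hccpos : ∀ n, 0 < cc n := fun n => by
    simp only [hcc]
    exact mul_pos (Real.rpow_pos_of_pos (hn2 n) _) (Real.rpow_pos_of_pos (hL1 n) _)
  set F : ℕ → ℝ → ℂ := fun n r =>
    (a n : ℂ) * ((((cc n + r ^ 2) ^ (μ + 1) : ℝ)) : ℂ)⁻¹ * (r : ℂ) ^ (s - 1) with hF
  have hKey := fun n => aux_key (hccpos n) hμ hs₀ h2σ'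
  have hIntF : ∀ n, IntegrableOn (F n) (Set.Ioi 0) := fun n =>
    ((hKey n).1.const_mul (a n : ℂ)).congr
      (Filter.Eventually.of_forall fun r => (mul_assoc _ _ _).symm)
  -- per-term complex value
  have hterm : ∀ n : ℕ, (a n : ℂ) * (cc n : ℂ) ^ (s / 2 - ((μ : ℂ) + 1)) = E n := by
    intro n
    have e1 : ((a n : ℝ) : ℂ)
        = Complex.exp ((Real.log ((n : ℝ) + 2) : ℂ) * (α : ℂ)) *
          Complex.exp ((Real.log (Real.log ((n : ℝ) + 2)) : ℂ) * (γ : ℂ)) := by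
      simp only [ha]
      rw [Complex.ofReal_mul, Complex.ofReal_cpow (hn2 n).le, Complex.ofReal_cpow (hL1 n).le,
        aux_cpow_pos (hn2 n), aux_cpow_pos (hL1 n)]
    have e2 : (cc n : ℂ) ^ (s / 2 - ((μ : ℂ) + 1))
        = Complex.exp (((β * Real.log ((n : ℝ) + 2)
            + δ * Real.log (Real.log ((n : ℝ) + 2)) : ℝ) : ℂ) * (s / 2 - ((μ : ℂ) + 1))) := by
      rw [aux_cpow_pos (hccpos n)]
      congr 2
      simp only [hcc]
      rw [Real.log_mul (Real.rpow_pos_of_pos (hn2 n) _).ne' (Real.rpow_pos_of_pos (hL1 n) _).ne',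
        Real.log_rpow (hn2 n), Real.log_rpow (hL1 n)]
    rw [e1, e2, hE]
    simp only [mul_assoc, ← Complex.exp_add]
    congr 1
    rw [hw₁, hw₂]
    push_cast
    ring
  have hFval : ∀ n : ℕ, (∫ r in Set.Ioi (0:ℝ), F n r)
      = E n * (Complex.Gamma ((μ : ℂ) + 1 - s / 2) * Complex.Gamma (s / 2)
          / (2 * Complex.Gamma ((μ : ℂ) + 1))) := by
    intro n
    have h1 : (∫ r in Set.Ioi (0:ℝ), F n r)
        = (a n : ℂ) * ∫ r in Set.Ioi (0:ℝ),
            ((((cc n + r ^ 2) ^ (μ + 1) : ℝ)) : ℂ)⁻¹ * (r : ℂ) ^ (s - 1) := by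
      rw [← integral_const_mul]
      exact setIntegral_congr_fun measurableSet_Ioi fun r hr => (mul_assoc _ _ _)
    rw [h1, (hKey n).2, ← mul_assoc, hterm]
  -- summability of the norm integrals
  set CR : ℝ := Real.Gamma (μ + 1 - σ / 2) * Real.Gamma (σ / 2) / (2 * Real.Gamma (μ + 1))
    with hCR
  have hCRnonneg : 0 ≤ CR := by
    have g1 := Real.Gamma_pos_of_pos (show 0 < μ + 1 - σ / 2 by linarith)
    have g2 := Real.Gamma_pos_of_pos (show 0 < σ / 2 by linarith)
    have g3 := Real.Gamma_pos_of_pos (show (0:ℝ) < μ + 1 by linarith)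
    rw [hCR]; positivity
  set M : ℕ → ℝ := fun n => a n * (cc n ^ (σ / 2 - (μ + 1)) * CR) with hM
  have hMnonneg : ∀ n, 0 ≤ M n := fun n =>
    mul_nonneg (hapos n).le
      (mul_nonneg (Real.rpow_nonneg (hccpos n).le _) hCRnonneg)
  have hMsum : Summable M := by
    have hbM : α + β * (σ / 2 - (μ + 1)) < -1 := by nlinarith
    have h0 := (aux_summable (b := α + β * (σ / 2 - (μ + 1)))
      (γ + δ * (σ / 2 - (μ + 1))) hbM).mul_right CR
    refine h0.congr fun n => ?_
    have hccpow : cc n ^ (σ / 2 - (μ + 1))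
        = ((n : ℝ) + 2) ^ (β * (σ / 2 - (μ + 1))) *
          Real.log ((n : ℝ) + 2) ^ (δ * (σ / 2 - (μ + 1))) := by
      simp only [hcc]
      rw [Real.mul_rpow (Real.rpow_nonneg (hn2 n).le _) (Real.rpow_nonneg (hL1 n).le _),
        ← Real.rpow_mul (hn2 n).le, ← Real.rpow_mul (hL1 n).le]
    simp only [hM, ha, hccpow]
    rw [Real.rpow_add (hn2 n), Real.rpow_add (hL1 n)]
    ring
  have hnormint : ∀ n, (∫ r in Set.Ioi (0:ℝ), ‖F n r‖) = M n := by
    intro n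
    have hptn : ∀ r ∈ Set.Ioi (0:ℝ), ‖F n r‖
        = a n * (((cc n + r ^ 2) ^ (μ + 1))⁻¹ * r ^ (σ - 1)) := by
      intro r hr
      have hr0 : (0:ℝ) < r := hr
      simp only [hF, norm_mul, norm_inv, Complex.norm_real, Real.norm_eq_abs,
        Complex.norm_cpow_eq_rpow_re_of_pos hr0, Complex.sub_re, Complex.one_re]
      have hccr : (0:ℝ) < (cc n + r ^ 2) ^ (μ + 1) :=
        Real.rpow_pos_of_pos (add_pos_of_pos_of_nonneg (hccpos n) (sq_nonneg r)) _
      rw [abs_of_pos (hapos n), abs_of_pos hccr, ← hσdef]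
      ring
    rw [setIntegral_congr_fun measurableSet_Ioi hptn, integral_const_mul,
      aux_keyR (hccpos n) hμ hs₀ h2σ]
  have hmeas : ∀ n, AEStronglyMeasurable (F n) (volume.restrict (Set.Ioi 0)) := fun n =>
    (hIntF n).aestronglyMeasurable
  have hlint : (∑' n, ∫⁻ r in Set.Ioi (0:ℝ), ‖F n r‖ₑ) ≠ ⊤ := by
    have heq : ∀ n, (∫⁻ r in Set.Ioi (0:ℝ), ‖F n r‖ₑ) = ENNReal.ofReal (M n) := by
      intro n
      rw [← ofReal_integral_norm_eq_lintegral_enorm (hIntF n), hnormint n]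
    rw [tsum_congr heq, ← ENNReal.ofReal_tsum_of_nonneg hMnonneg hMsum]
    exact ENNReal.ofReal_ne_top
  -- interchange sum and integral
  have hstep1 : (∫ r in Set.Ioi (0 : ℝ),
        ((∑' n : ℕ, ((n : ℝ) + 2) ^ α * (Real.log ((n : ℝ) + 2)) ^ γ /
          (((n : ℝ) + 2) ^ β * (Real.log ((n : ℝ) + 2)) ^ δ + r ^ 2) ^ (μ + 1) : ℝ) : ℂ)
        * (r : ℂ) ^ (s - 1))
      = ∫ r in Set.Ioi (0:ℝ), ∑' n, F n r := by
    refine setIntegral_congr_fun measurableSet_Ioi fun r hr => ?_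
    rw [Complex.ofReal_tsum, ← tsum_mul_right]
    refine tsum_congr fun n => ?_
    simp only [hF, ha, hcc]
    rw [Complex.ofReal_div, div_eq_mul_inv]
  rw [hstep1, integral_tsum hmeas hlint, tsum_congr hFval, tsum_mul_right]
  ring
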